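/- Let A be a unital C*-algebra, let a ∈ A be selfadjoint with 0 ≤ a, and let c ≥ 0 be such that the spectrum of a is contained in [c,∞). Then for every ζ ∈ ℂ with ζ ∉ [c,∞), writing ψ = arg(ζ − c) ∈ (0,2π), the element a − ζ·1 is invertible and the square root a^{1/2} satisfies: ‖a^{1/2}·(a − ζ·1)⁻¹‖ ≤ (c + 1)^{1/2}·c(ψ)·|ζ − c|⁻¹ if |ζ − c| < 1, and ‖a^{1/2}·(a − ζ·1)⁻¹‖ ≤ (c + 1)^{1/2}·c(ψ)·|ζ − c|^{−1/2} if |ζ − c| ≥ 1. -/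

import Mathlib

/-- The coefficient `c(ψ)` from the paper, for `ψ ∈ (0, 2π)`:
`c(ψ) = 1/|sin ψ|` if `ψ ∈ (0, π/2) ∪ (3π/2, 2π)`, and `c(ψ) = 1` if `ψ ∈ [π/2, 3π/2]`. -/
noncomputable def cArg (ψ : ℝ) : ℝ :=
  if (0 < ψ ∧ ψ < Real.pi / 2) ∨ (3 * Real.pi / 2 < ψ ∧ ψ < 2 * Real.pi) then
    |Real.sin ψ|⁻¹
  else 1

private lemma cArg_nonneg (ψ : ℝ) : 0 ≤ cArg ψ := by
  unfold cArg; split <;> positivity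


private lemma auxA1 (c t r : ℝ) (hc : 0 ≤ c) (ht : 0 ≤ t) (hr : 0 ≤ r) (hr1 : r ≤ 1) :
    (c + t) * r^2 ≤ (c + 1) * (t^2 + r^2) := by
  rcases le_total t 1 with h | h
  · nlinarith
  · nlinarith [mul_nonneg (sub_nonneg.2 h) (sub_nonneg.2 (show r^2 ≤ 1 by nlinarith))]

private lemma auxA2 (c t r : ℝ) (hc : 0 ≤ c) (ht : 0 ≤ t) (hr1 : 1 ≤ r) :
    (c + t) * r ≤ (c + 1) * (t^2 + r^2) := by
  nlinarith [sq_nonneg (t - r), mul_nonneg hc (sub_nonneg.2 (show r ≤ r^2 by nlinarith))]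

private lemma auxB1 (c t r co s : ℝ) (hc : 0 ≤ c) (ht : 0 ≤ t) (hr : 0 ≤ r) (hr1 : r ≤ 1)
    (hco : 0 < co) (hco1 : co ≤ 1) (hs : 0 ≤ s) (hpy : co^2 + s = 1) :
    (c + t) * s * r^2 ≤ (c + 1) * ((t - r*co)^2 + s*r^2) := by
  rcases le_total t 1 with h | h
  · nlinarith [sq_nonneg (t - r*co), mul_nonneg hs (mul_nonneg hr hr)]
  · -- (t-1)*s*r^2 ≤ (c+1)*(t-r*co)^2
    have hδ : 0 ≤ 1 - r*co := by nlinarith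
    have hs2 : s ≤ 2*(1 - r*co) := by nlinarith [mul_nonneg (sub_nonneg.2 hr1) hco.le]
    have h1 : (t-1)*s*r^2 ≤ (t-1)*(2*(1-r*co)) := by
      nlinarith [mul_nonneg (sub_nonneg.2 h) (sub_nonneg.2 hs2), mul_nonneg (mul_nonneg (sub_nonneg.2 h) hs) (sub_nonneg.2 (show r^2 ≤ 1 by nlinarith))]
    have h2 : (t-1)*(2*(1-r*co)) ≤ (t - r*co)^2 := by nlinarith [sq_nonneg (t - 1 - (1 - r*co))]
    nlinarith [sq_nonneg (t - r*co), mul_nonneg hc (sq_nonneg (t - r*co)), mul_nonneg hs (mul_nonneg hr hr), mul_nonneg hc (mul_nonneg hs (mul_nonneg hr hr))]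

private lemma auxB2 (c t r co s : ℝ) (hc : 0 ≤ c) (ht : 0 ≤ t) (hr1 : 1 ≤ r)
    (hco : 0 < co) (hco1 : co ≤ 1) (hs : 0 ≤ s) (hpy : co^2 + s = 1) :
    (c + t) * s * r ≤ (c + 1) * ((t - r*co)^2 + s*r^2) := by
  have hr : (0:ℝ) ≤ r := le_trans zero_le_one hr1
  rcases le_total (t - r*co) 0 with h | h
  · -- t ≤ r*co ≤ r
    have htr : t ≤ r := by nlinarith
    nlinarith [sq_nonneg (t - r*co), mul_nonneg hc (sq_nonneg (t - r*co)),
      mul_nonneg hc (mul_nonneg hs (mul_nonneg hr (sub_nonneg.2 hr1))),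
      mul_nonneg hs (mul_nonneg hr (sub_nonneg.2 htr))]
  · -- u ≥ 0 case; s = (1-co)(1+co)
    have key : (t - r*co)*s*r ≤ (t-r*co)^2 + s*r^2*(1-co) := by
      have hs' : s = 1 - co^2 := by linarith
      subst hs'
      nlinarith [mul_nonneg (add_nonneg zero_le_one hco.le) (sq_nonneg (t - r*co - r*(1-co))),
        mul_nonneg (sub_nonneg.2 hco1) (sq_nonneg (t - r*co)),
        mul_nonneg (mul_nonneg (sub_nonneg.2 (show co^2 ≤ 1 by nlinarith)) (sq_nonneg r)) (sub_nonneg.2 hco1)]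
    nlinarith [mul_nonneg hc (sq_nonneg (t - r*co)),
      mul_nonneg hc (mul_nonneg hs (mul_nonneg hr (sub_nonneg.2 hr1))),
      mul_nonneg (mul_nonneg hs hr) (sub_nonneg.2 hr1),
      mul_nonneg hc (sq_nonneg (t-r*co))]

private lemma scalar_main (c t r ψ : ℝ) (hc : 0 ≤ c) (ht : 0 ≤ t) (hr : 0 ≤ r)
    (hψ1 : 0 < ψ) (hψ2 : ψ < 2*Real.pi) :
    (r ≤ 1 → (c+t)*r^2 ≤ (c+1)*(cArg ψ)^2*((t - r*Real.cos ψ)^2 + (Real.sin ψ)^2*r^2)) ∧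
    (1 ≤ r → (c+t)*r ≤ (c+1)*(cArg ψ)^2*((t - r*Real.cos ψ)^2 + (Real.sin ψ)^2*r^2)) := by
  have hpi := Real.pi_pos
  set co := Real.cos ψ
  set si := Real.sin ψ
  have hpy : co^2 + si^2 = 1 := Real.cos_sq_add_sin_sq ψ
  by_cases hcond : (0 < ψ ∧ ψ < Real.pi / 2) ∨ (3 * Real.pi / 2 < ψ ∧ ψ < 2 * Real.pi)
  · -- cos ψ > 0, sin ψ ≠ 0
    have hco : 0 < co := by
      rcases hcond with ⟨h1, h2⟩ | ⟨h1, h2⟩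
      · exact Real.cos_pos_of_mem_Ioo ⟨by linarith, h2⟩
      · have : Real.cos (ψ - 2*Real.pi) = co := Real.cos_sub_two_pi ψ
        rw [← this]
        exact Real.cos_pos_of_mem_Ioo ⟨by linarith, by linarith⟩
    have hsi : si ≠ 0 := by
      rcases hcond with ⟨h1, h2⟩ | ⟨h1, h2⟩
      · exact ne_of_gt (Real.sin_pos_of_pos_of_lt_pi h1 (by linarith))
      · have : Real.sin (ψ - 2*Real.pi) = si := Real.sin_sub_two_pi ψ
        refine ne_of_lt ?_
        rw [← this]
        exact Real.sin_neg_of_neg_of_neg_pi_lt (by linarith) (by linarith)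
    have hK : cArg ψ = |si|⁻¹ := if_pos hcond
    have hK2 : (cArg ψ)^2 = (si^2)⁻¹ := by rw [hK, inv_pow, sq_abs]
    have hs2 : 0 < si^2 := by positivity
    have hco1 : co ≤ 1 := Real.cos_le_one ψ
    constructor
    · intro hr1
      have := auxB1 c t r co (si^2) hc ht hr hr1 hco hco1 (sq_nonneg si) hpy
      rw [hK2]
      rw [show (c+1)*(si^2)⁻¹*((t - r*co)^2 + si^2*r^2) = ((c+1)*((t - r*co)^2 + si^2*r^2))/(si^2) by ring, le_div_iff₀ hs2]
      nlinarith [this]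
    · intro hr1
      have := auxB2 c t r co (si^2) hc ht hr1 hco hco1 (sq_nonneg si) hpy
      rw [hK2]
      rw [show (c+1)*(si^2)⁻¹*((t - r*co)^2 + si^2*r^2) = ((c+1)*((t - r*co)^2 + si^2*r^2))/(si^2) by ring, le_div_iff₀ hs2]
      nlinarith [this]
  · -- cos ψ ≤ 0
    have hco : co ≤ 0 := by
      push_neg at hcond
      have h1 : Real.pi/2 ≤ ψ := by
        by_contra h
        exact absurd (hcond.1 hψ1) (by push_neg; linarith)
      have h2 : ψ ≤ 3*Real.pi/2 := by
        by_contra h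
        exact absurd (hcond.2 (by linarith)) (by push_neg; exact hψ2)
      exact Real.cos_nonpos_of_pi_div_two_le_of_le h1 (by linarith)
    have hK : cArg ψ = 1 := if_neg hcond
    have hD : t^2 + r^2 ≤ (t - r*co)^2 + si^2*r^2 := by
      nlinarith [mul_nonneg (mul_nonneg ht hr) (neg_nonneg.2 hco)]
    constructor
    · intro hr1
      have := auxA1 c t r hc ht hr hr1
      rw [hK]
      nlinarith [mul_nonneg (add_nonneg hc zero_le_one) (sub_nonneg.2 hD)]
    · intro hr1
      have := auxA2 c t r hc ht hr1
      rw [hK]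
      nlinarith [mul_nonneg (add_nonneg hc zero_le_one) (sub_nonneg.2 hD)]

/-- In a unital C*-algebra, let `a` be selfadjoint with `0 ≤ a` and spectrum contained in
`[c,∞)` (`c ≥ 0`). Then for `ζ ∈ ℂ \ [c,∞)` with `ψ = arg(ζ − c) ∈ (0, 2π)` the element
`a − ζ·1` is invertible, and the (unique) positive square root `b = a^{1/2}` (i.e. any
selfadjoint `b ≥ 0` with `b² = a`) satisfies
`‖a^{1/2}(a − ζ·1)⁻¹‖ ≤ (c+1)^{1/2} c(ψ) |ζ − c|⁻¹` if `|ζ − c| < 1`, and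
`‖a^{1/2}(a − ζ·1)⁻¹‖ ≤ (c+1)^{1/2} c(ψ) |ζ − c|^{−1/2}` if `|ζ − c| ≥ 1`. -/
theorem sqrt_mul_resolvent_norm_bound {A : Type*} [CStarAlgebra A]
    [PartialOrder A] [StarOrderedRing A]
    (a : A) (ha : IsSelfAdjoint a) (ha0 : 0 ≤ a) (c : ℝ) (hc : 0 ≤ c)
    (hspec : spectrum ℂ a ⊆ Complex.ofReal '' Set.Ici c)
    (ζ : ℂ) (ψ : ℝ)
    (hζ : ∀ x : ℝ, c ≤ x → ζ ≠ (x : ℂ))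
    (hψ : ψ ∈ Set.Ioo (0 : ℝ) (2 * Real.pi))
    (hζψ : ζ - (c : ℂ) = (‖ζ - (c : ℂ)‖ : ℂ) * Complex.exp ((ψ : ℂ) * Complex.I)) :
    IsUnit (a - ζ • (1 : A)) ∧
      ∀ b : A, IsSelfAdjoint b → 0 ≤ b → b * b = a →
        (‖ζ - (c : ℂ)‖ < 1 →
          ‖b * Ring.inverse (a - ζ • (1 : A))‖
            ≤ Real.sqrt (c + 1) * cArg ψ * (‖ζ - (c : ℂ)‖)⁻¹) ∧
        (1 ≤ ‖ζ - (c : ℂ)‖ →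
          ‖b * Ring.inverse (a - ζ • (1 : A))‖
            ≤ Real.sqrt (c + 1) * cArg ψ * (Real.sqrt (‖ζ - (c : ℂ)‖))⁻¹) := by
  have hsn : IsStarNormal a := ha.isStarNormal
  have hζc : ζ ≠ (c : ℂ) := hζ c le_rfl
  set r : ℝ := ‖ζ - (c : ℂ)‖ with hrdef
  have hr : 0 < r := by
    rw [hrdef, norm_pos_iff]
    exact sub_ne_zero.2 hζc
  -- re/im of ζ
  have hre : ζ.re = c + r * Real.cos ψ := by
    have h := congrArg Complex.re hζψ
    simp only [Complex.sub_re, Complex.ofReal_re, Complex.exp_mul_I, Complex.add_re,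
      Complex.mul_re, Complex.cos_ofReal_re, Complex.cos_ofReal_im, Complex.sin_ofReal_re,
      Complex.sin_ofReal_im, Complex.I_re, Complex.I_im, Complex.ofReal_im,
      mul_zero, mul_one, zero_mul, sub_zero, add_zero, zero_add] at h
    linarith [h]
  have him : ζ.im = r * Real.sin ψ := by
    have h := congrArg Complex.im hζψ
    simp only [Complex.sub_im, Complex.ofReal_im, Complex.exp_mul_I, Complex.add_im,
      Complex.mul_im, Complex.cos_ofReal_re, Complex.cos_ofReal_im, Complex.sin_ofReal_re,
      Complex.sin_ofReal_im, Complex.I_re, Complex.I_im, Complex.ofReal_re,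
      mul_zero, mul_one, zero_mul, sub_zero, add_zero, zero_add] at h
    linarith [h]
  -- spectrum facts
  have hne : ∀ z ∈ spectrum ℂ a, z ≠ ζ := by
    intro z hz h
    obtain ⟨x, hx, rfl⟩ := hspec hz
    exact hζ x hx h.symm
  have hgcont : ContinuousOn (fun z : ℂ => (z - ζ)⁻¹) (spectrum ℂ a) :=
    ContinuousOn.inv₀ ((continuous_id.sub continuous_const).continuousOn)
      (fun z hz => sub_ne_zero.2 (hne z hz))
  -- a - ζ•1 as cfc and its inverse
  have hsub : a - ζ • (1 : A) = cfc (fun z : ℂ => z - ζ) a := by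
    rw [cfc_sub (fun z : ℂ => z) (fun _ : ℂ => ζ) a (by fun_prop) (by fun_prop),
      cfc_id' (R := ℂ) a, cfc_const ζ a, Algebra.algebraMap_eq_smul_one]
  have hmul1 : (a - ζ • (1 : A)) * cfc (fun z : ℂ => (z - ζ)⁻¹) a = 1 := by
    rw [hsub, ← cfc_mul _ _ a (by fun_prop) hgcont]
    have heq : (spectrum ℂ a).EqOn (fun z : ℂ => (z - ζ) * (z - ζ)⁻¹) (fun _ : ℂ => 1) :=
      fun z hz => mul_inv_cancel₀ (sub_ne_zero.2 (hne z hz))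
    rw [cfc_congr heq, cfc_const_one ℂ a]
  have hmul2 : cfc (fun z : ℂ => (z - ζ)⁻¹) a * (a - ζ • (1 : A)) = 1 := by
    rw [hsub, ← cfc_mul _ _ a hgcont (by fun_prop)]
    have heq : (spectrum ℂ a).EqOn (fun z : ℂ => (z - ζ)⁻¹ * (z - ζ)) (fun _ : ℂ => 1) :=
      fun z hz => inv_mul_cancel₀ (sub_ne_zero.2 (hne z hz))
    rw [cfc_congr heq, cfc_const_one ℂ a]
  have hunit : IsUnit (a - ζ • (1 : A)) :=
    ⟨⟨a - ζ • (1 : A), cfc (fun z : ℂ => (z - ζ)⁻¹) a, hmul1, hmul2⟩, rfl⟩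
  have hinv : Ring.inverse (a - ζ • (1 : A)) = cfc (fun z : ℂ => (z - ζ)⁻¹) a :=
    Ring.inverse_unit ⟨a - ζ • (1 : A), cfc (fun z : ℂ => (z - ζ)⁻¹) a, hmul1, hmul2⟩
  refine ⟨hunit, fun b hbsa hb0 hbb => ?_⟩
  -- b as cfc
  have hsq2 : cfc Real.sqrt a * cfc Real.sqrt a = a := by
    rw [← cfc_mul _ _ a (Real.continuous_sqrt.continuousOn) (Real.continuous_sqrt.continuousOn)]
    have heq : (spectrum ℝ a).EqOn (fun x => Real.sqrt x * Real.sqrt x) (fun x => x) :=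
      fun x hx => Real.mul_self_sqrt (spectrum_nonneg_of_nonneg ha0 hx)
    rw [cfc_congr heq, cfc_id' (R := ℝ) a]
  have hsq0 : (0 : A) ≤ cfc Real.sqrt a := cfc_nonneg fun x _ => Real.sqrt_nonneg x
  have hbeq : b = cfc (fun z : ℂ => ((Real.sqrt z.re : ℝ) : ℂ)) a := by
    have h1 : CFC.sqrt a = b := CFC.sqrt_unique hbb hb0
    have h2 : CFC.sqrt a = cfc Real.sqrt a := CFC.sqrt_unique hsq2 hsq0
    rw [← h1, h2, cfc_real_eq_complex Real.sqrt ha]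
  have hfcont : ContinuousOn (fun z : ℂ => ((Real.sqrt z.re : ℝ) : ℂ)) (spectrum ℂ a) :=
    (Complex.continuous_ofReal.comp (Real.continuous_sqrt.comp Complex.continuous_re)).continuousOn
  have hprod : b * Ring.inverse (a - ζ • (1 : A))
      = cfc (fun z : ℂ => ((Real.sqrt z.re : ℝ) : ℂ) * (z - ζ)⁻¹) a := by
    rw [hbeq, hinv, ← cfc_mul _ _ a hfcont hgcont]
  -- master norm bound
  have hK0 : 0 ≤ cArg ψ := cArg_nonneg ψ
  have master : ∀ M2 : ℝ, 0 < M2 →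
      (∀ x : ℝ, c ≤ x → x * M2
        ≤ (c+1)*(cArg ψ)^2*(((x - c) - r*Real.cos ψ)^2 + (Real.sin ψ)^2*r^2)) →
      ‖b * Ring.inverse (a - ζ • (1 : A))‖ ≤ Real.sqrt (c+1) * cArg ψ * (Real.sqrt M2)⁻¹ := by
    intro M2 hM2 hkey
    rw [hprod]
    have hT0 : 0 ≤ Real.sqrt (c+1) * cArg ψ * (Real.sqrt M2)⁻¹ := by positivity
    apply norm_cfc_le hT0
    intro z hz
    obtain ⟨x, hx, rfl⟩ := hspec hz
    have hx0 : 0 ≤ x := hc.trans hx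
    have habs : 0 < ‖(x : ℂ) - ζ‖ := by
      rw [norm_pos_iff]
      exact sub_ne_zero.2 (hne _ hz)
    have hnorm : ‖((Real.sqrt (Complex.ofReal x).re : ℝ) : ℂ) * ((x : ℂ) - ζ)⁻¹‖
        = Real.sqrt x * (‖(x : ℂ) - ζ‖)⁻¹ := by
      rw [norm_mul, norm_inv]
      simp [Complex.norm_real, Real.norm_eq_abs, abs_of_nonneg (Real.sqrt_nonneg x)]
    rw [hnorm, ← div_eq_mul_inv, div_le_iff₀ habs]
    have hD : (‖(x : ℂ) - ζ‖)^2
        = ((x - c) - r*Real.cos ψ)^2 + (Real.sin ψ)^2*r^2 := by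
      rw [Complex.sq_norm, Complex.normSq_apply]
      simp only [Complex.sub_re, Complex.ofReal_re, Complex.sub_im, Complex.ofReal_im]
      rw [hre, him]
      ring
    have hgoal : x ≤ (Real.sqrt (c+1) * cArg ψ * (Real.sqrt M2)⁻¹ * ‖(x : ℂ) - ζ‖)^2 := by
      have hexp : (Real.sqrt (c+1) * cArg ψ * (Real.sqrt M2)⁻¹ * ‖(x : ℂ) - ζ‖)^2
          = (c+1) * (cArg ψ)^2 * (((x - c) - r*Real.cos ψ)^2 + (Real.sin ψ)^2*r^2) * M2⁻¹ := by
        rw [mul_pow, mul_pow, mul_pow, hD, Real.sq_sqrt (by linarith : (0:ℝ) ≤ c + 1),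
          inv_pow, Real.sq_sqrt hM2.le]
        ring
      rw [hexp]
      calc x = x * M2 * M2⁻¹ := by field_simp
        _ ≤ (c+1)*(cArg ψ)^2*(((x - c) - r*Real.cos ψ)^2 + (Real.sin ψ)^2*r^2) * M2⁻¹ :=
            mul_le_mul_of_nonneg_right (hkey x hx) (by positivity)
    calc Real.sqrt x ≤ Real.sqrt ((Real.sqrt (c+1) * cArg ψ * (Real.sqrt M2)⁻¹ * ‖(x : ℂ) - ζ‖)^2) :=
          Real.sqrt_le_sqrt hgoal
      _ = Real.sqrt (c+1) * cArg ψ * (Real.sqrt M2)⁻¹ * ‖(x : ℂ) - ζ‖ :=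
          Real.sqrt_sq (by positivity)
  constructor
  · intro hr1
    have hmain := master (r^2) (by positivity) ?_
    · rwa [Real.sqrt_sq hr.le] at hmain
    · intro x hx
      exact ((scalar_main c (x - c) r ψ hc (by linarith) hr.le hψ.1 hψ.2).1 hr1.le).trans_eq' (by ring)
  · intro hr1
    apply master r hr
    intro x hx
    exact ((scalar_main c (x - c) r ψ hc (by linarith) hr.le hψ.1 hψ.2).2 hr1).trans_eq' (by ring)
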